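/- Let G be a d_G-regular graph of order n₁ and H a d_H-regular graph of order n₂, with d_G ≥ 2 and d_H ≥ 2. Then Cc(G × H) = f · Cc(G) · Cc(H), where f = (d_G − 1)(d_H − 1)/(d_G · d_H − 1). -/

import Mathlib

variable {α β : Type*}

/-- Tensor (categorical) product of simple graphs. -/
def tensorProdG (G : SimpleGraph α) (H : SimpleGraph β) : SimpleGraph (α × β) where
  Adj x y := G.Adj x.1 y.1 ∧ H.Adj x.2 y.2
  symm := ⟨fun _ _ h => ⟨h.1.symm, h.2.symm⟩⟩
  loopless := ⟨fun x h => G.loopless.irrefl x.1 h.1⟩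

instance (G : SimpleGraph α) (H : SimpleGraph β) [DecidableRel G.Adj] [DecidableRel H.Adj] :
    DecidableRel (tensorProdG G H).Adj := fun x y =>
    inferInstanceAs (Decidable (G.Adj x.1 y.1 ∧ H.Adj x.2 y.2))

/-- Number of triangles incident to `u`: edges of the induced neighborhood. -/
noncomputable def triCount (G : SimpleGraph α) [Fintype α] (u : α) : ℕ :=
  Nat.card (SimpleGraph.induce (G.neighborSet u) G).edgeSet

/-- Local clustering coefficient. -/
noncomputable def locCc (G : SimpleGraph α) [Fintype α] [DecidableRel G.Adj] (u : α) : ℝ :=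
  if 2 ≤ G.degree u then (triCount G u : ℝ) / ((G.degree u).choose 2) else 0

/-- Global clustering coefficient. -/
noncomputable def globCc (G : SimpleGraph α) [Fintype α] [DecidableRel G.Adj] : ℝ :=
  (∑ v, locCc G v) / (Fintype.card α)

/-- Minimum degree of the induced neighborhood of `u`. -/
noncomputable def nbrMinDeg (G : SimpleGraph α) [Fintype α] [DecidableRel G.Adj] (u : α) : ℕ :=
  (SimpleGraph.induce (G.neighborSet u) G).minDegree

/-- Average degree, as a real number. -/
noncomputable def avgDeg (G : SimpleGraph α) [Fintype α] [DecidableRel G.Adj] : ℝ :=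
  (∑ v, (G.degree v : ℝ)) / (Fintype.card α)

@[simp] lemma tensorProdG_adj {G : SimpleGraph α} {H : SimpleGraph β} {x y : α × β} :
    (tensorProdG G H).Adj x y ↔ G.Adj x.1 y.1 ∧ H.Adj x.2 y.2 := Iff.rfl

lemma tensor_neighborFinset [Fintype α] [Fintype β] (G : SimpleGraph α) (H : SimpleGraph β)
    [DecidableRel G.Adj] [DecidableRel H.Adj] (a : α) (b : β) :
    (tensorProdG G H).neighborFinset (a, b) = G.neighborFinset a ×ˢ H.neighborFinset b := by
  ext ⟨x, y⟩
  simp [SimpleGraph.mem_neighborFinset]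

lemma tensor_degree [Fintype α] [Fintype β] (G : SimpleGraph α) (H : SimpleGraph β)
    [DecidableRel G.Adj] [DecidableRel H.Adj] (a : α) (b : β) :
    (tensorProdG G H).degree (a, b) = G.degree a * H.degree b := by
  unfold SimpleGraph.degree
  rw [tensor_neighborFinset, Finset.card_product]

lemma ncard_edge {γ : Type*} [Fintype γ] (C : SimpleGraph γ) [DecidableRel C.Adj] :
    Nat.card C.edgeSet = C.edgeFinset.card := by
  rw [Nat.card_coe_set_eq, Set.ncard_eq_toFinset_card']
  congr 1

lemma tensor_edge_ncard [Fintype α] [Fintype β] (A : SimpleGraph α) (B : SimpleGraph β)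
    [DecidableRel A.Adj] [DecidableRel B.Adj] :
    Nat.card (tensorProdG A B).edgeSet = 2 * (Nat.card A.edgeSet * Nat.card B.edgeSet) := by
  classical
  have h1 := (tensorProdG A B).sum_degrees_eq_twice_card_edges
  have h2 : ∑ x : α × β, (tensorProdG A B).degree x
      = (2 * A.edgeFinset.card) * (2 * B.edgeFinset.card) := by
    rw [← A.sum_degrees_eq_twice_card_edges, ← B.sum_degrees_eq_twice_card_edges,
      Finset.sum_mul_sum, Fintype.sum_prod_type]
    exact Finset.sum_congr rfl fun a _ => Finset.sum_congr rfl fun b _ => tensor_degree A B a b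
  have h3 := h1.symm.trans h2
  have h4 := Nat.eq_of_mul_eq_mul_left (show 0 < 2 by norm_num) (h3.trans
    (show 2 * A.edgeFinset.card * (2 * B.edgeFinset.card)
        = 2 * (2 * (A.edgeFinset.card * B.edgeFinset.card)) by ring))
  rw [ncard_edge (tensorProdG A B), ncard_edge A, ncard_edge B]
  exact h4

instance instDecInduceAdj (s : Set α) (G : SimpleGraph α) [DecidableRel G.Adj] :
    DecidableRel (SimpleGraph.induce s G).Adj :=
  fun a b => ‹DecidableRel G.Adj› (a : α) (b : α)

/-- The induced neighborhood of `(u, v)` in the tensor product is the tensor product of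
the induced neighborhoods. -/
def nbhdIso (G : SimpleGraph α) (H : SimpleGraph β) (u : α) (v : β) :
    SimpleGraph.induce ((tensorProdG G H).neighborSet (u, v)) (tensorProdG G H) ≃g
      tensorProdG (SimpleGraph.induce (G.neighborSet u) G)
        (SimpleGraph.induce (H.neighborSet v) H) where
  toFun x :=
    (⟨x.1.1, (show G.Adj u x.1.1 ∧ H.Adj v x.1.2 from x.2).1⟩,
     ⟨x.1.2, (show G.Adj u x.1.1 ∧ H.Adj v x.1.2 from x.2).2⟩)
  invFun p := ⟨(p.1.1, p.2.1), ⟨p.1.2, p.2.2⟩⟩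
  left_inv _ := rfl
  right_inv _ := rfl
  map_rel_iff' := Iff.rfl

lemma triCount_tensor [Fintype α] [Fintype β] (G : SimpleGraph α) (H : SimpleGraph β)
    [DecidableRel G.Adj] [DecidableRel H.Adj] (u : α) (v : β) :
    triCount (tensorProdG G H) (u, v) = 2 * (triCount G u * triCount H v) := by
  unfold triCount
  rw [Nat.card_congr (nbhdIso G H u v).mapEdgeSet]
  exact tensor_edge_ncard _ _

lemma choose_key {dG dH : ℕ} (hdG : 2 ≤ dG) (hdH : 2 ≤ dH) :
    (2 : ℝ) / ((dG * dH).choose 2 : ℕ)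
      = ((dG : ℝ) - 1) * ((dH : ℝ) - 1) / ((dG : ℝ) * (dH : ℝ) - 1) /
        ((dG.choose 2 : ℕ) * ((dH.choose 2 : ℕ) : ℝ)) := by
  have hG2 : (2 : ℝ) ≤ (dG : ℝ) := by exact_mod_cast hdG
  have hH2 : (2 : ℝ) ≤ (dH : ℝ) := by exact_mod_cast hdH
  have hG0 : (dG : ℝ) ≠ 0 := by linarith
  have hH0 : (dH : ℝ) ≠ 0 := by linarith
  have hG1 : (dG : ℝ) - 1 ≠ 0 := by linarith
  have hH1 : (dH : ℝ) - 1 ≠ 0 := by linarith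
  have hGH : (dG : ℝ) * (dH : ℝ) - 1 ≠ 0 := by nlinarith
  rw [Nat.cast_choose_two, Nat.cast_choose_two, Nat.cast_choose_two]
  push_cast
  field_simp


variable [Fintype α] [Fintype β] (G : SimpleGraph α) (H : SimpleGraph β)
  [DecidableRel G.Adj] [DecidableRel H.Adj]

theorem tensor_globCc_regular (dG dH : ℕ) (hG : G.IsRegularOfDegree dG)
    (hH : H.IsRegularOfDegree dH) (hdG : 2 ≤ dG) (hdH : 2 ≤ dH) :
    globCc (tensorProdG G H) =
      ((dG : ℝ) - 1) * ((dH : ℝ) - 1) / ((dG : ℝ) * (dH : ℝ) - 1) *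
        globCc G * globCc H := by
  have hdegT : ∀ x : α × β, (tensorProdG G H).degree x = dG * dH := by
    rintro ⟨a, b⟩
    rw [tensor_degree, hG a, hH b]
  have h2T : 2 ≤ dG * dH := le_trans hdG (Nat.le_mul_of_pos_right _ (by omega))
  have hlocT : ∀ x : α × β, locCc (tensorProdG G H) x
      = 2 / (((dG * dH).choose 2 : ℕ) : ℝ)
        * ((triCount G x.1 : ℝ) * (triCount H x.2 : ℝ)) := by
    rintro ⟨a, b⟩
    unfold locCc
    rw [hdegT (a, b), if_pos h2T, triCount_tensor]
    push_cast
    ring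
  have hlocG : ∀ u, locCc G u = (triCount G u : ℝ) / ((dG.choose 2 : ℕ) : ℝ) := by
    intro u
    unfold locCc
    rw [hG u, if_pos hdG]
  have hlocH : ∀ v, locCc H v = (triCount H v : ℝ) / ((dH.choose 2 : ℕ) : ℝ) := by
    intro v
    unfold locCc
    rw [hH v, if_pos hdH]
  unfold globCc
  rw [Fintype.card_prod]
  have hsT : ∑ x : α × β, locCc (tensorProdG G H) x
      = 2 / (((dG * dH).choose 2 : ℕ) : ℝ)
        * ((∑ u, (triCount G u : ℝ)) * (∑ v, (triCount H v : ℝ))) := by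
    rw [Fintype.sum_prod_type, Finset.sum_mul_sum, Finset.mul_sum]
    refine Finset.sum_congr rfl fun a _ => ?_
    rw [Finset.mul_sum]
    exact Finset.sum_congr rfl fun b _ => hlocT (a, b)
  have hsG : ∑ u, locCc G u = (∑ u, (triCount G u : ℝ)) / ((dG.choose 2 : ℕ) : ℝ) := by
    rw [Finset.sum_div]
    exact Finset.sum_congr rfl fun u _ => hlocG u
  have hsH : ∑ v, locCc H v = (∑ v, (triCount H v : ℝ)) / ((dH.choose 2 : ℕ) : ℝ) := by
    rw [Finset.sum_div]
    exact Finset.sum_congr rfl fun v _ => hlocH v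
  rw [hsT, hsG, hsH, choose_key hdG hdH]
  push_cast
  ring
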